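/- Let n ≥ 2 and let V be an admissible configuration of size n. Then there exist exactly two admissible configurations U of size n+1 whose reduction R(U) equals V. (Equivalently: the reduction map from admissible configurations of size n+1 to admissible configurations of size n is surjective and exactly two-to-one, so every admissible configuration is obtained uniquely from the single chain {3,1} by repeatedly applying one of the two extension moves.) -/

import Mathlib

/-- The maximum entry of a finite set of integers (`0` for the empty set). -/
def fmax (C : Finset ℤ) : ℤ := WithBot.unbotD 0 C.max

/-- The minimum entry of a finite set of integers (`0` for the empty set). -/
def fmin (C : Finset ℤ) : ℤ := WithTop.untopD 0 C.min

/-- A *chain* is a nonempty set of integers of the form `{c, c-2, …, c-2k}`. -/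
def IsChainSet (C : Finset ℤ) : Prop :=
  ∃ (c : ℤ) (k : ℕ), C = (Finset.range (k + 1)).image (fun i : ℕ => c - 2 * (i : ℤ))

/-- Two chains with disjoint entries, with maxima `A, B` and minima `a, b`, are *linked*
if `A > B > a` or `B > A > b`. -/
def LinkedChains (C D : Finset ℤ) : Prop :=
  Disjoint C D ∧
    ((fmax D < fmax C ∧ fmin C < fmax D) ∨ (fmax C < fmax D ∧ fmin D < fmax C))

/-- The set of all entries of a collection of chains. -/
def entriesOf (S : Finset (Finset ℤ)) : Finset ℤ := S.biUnion id

/-- A finite collection of pairwise disjoint chains. -/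
def IsChainCollection (S : Finset (Finset ℤ)) : Prop :=
  (∀ C ∈ S, IsChainSet C) ∧ ∀ C ∈ S, ∀ D ∈ S, C ≠ D → Disjoint C D

/-- A collection of pairwise disjoint chains is *interlaced* if any two of its chains are
joined by a finite sequence of chains of the collection in which consecutive chains are
linked. -/
def Interlaced (S : Finset (Finset ℤ)) : Prop :=
  ∀ C ∈ S, ∀ D ∈ S,
    Relation.ReflTransGen (fun X Y => X ∈ S ∧ Y ∈ S ∧ LinkedChains X Y) C D

/-- An *admissible configuration of size `n`*: an interlaced collection of pairwise disjoint
chains of positive integers with `n` entries in total and smallest entry equal to `1`. -/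
def AdmissibleConfig (n : ℕ) (S : Finset (Finset ℤ)) : Prop :=
  IsChainCollection S ∧ Interlaced S ∧ (entriesOf S).card = n ∧
    (∀ x ∈ entriesOf S, 0 < x) ∧ (1 : ℤ) ∈ entriesOf S

/-- The reduction of Proposition 3.9: `Reduces U V` says that `V` is obtained from `U` by
removing the chain `{M-1}` if it is present (where `M` is the largest entry of `U`), and
otherwise by removing the entry `M` from the chain of `U` containing it. -/
def Reduces (U V : Finset (Finset ℤ)) : Prop :=
  (({fmax (entriesOf U) - 1} : Finset ℤ) ∈ U ∧
      V = U.erase ({fmax (entriesOf U) - 1} : Finset ℤ)) ∨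
  (({fmax (entriesOf U) - 1} : Finset ℤ) ∉ U ∧
      ∃ C ∈ U, fmax (entriesOf U) ∈ C ∧
        V = insert (C.erase (fmax (entriesOf U))) (U.erase C))

open Finset

lemma fmax_eq_max' {C : Finset ℤ} (h : C.Nonempty) : fmax C = C.max' h := by
  simp [fmax, ← Finset.coe_max' h]

lemma fmax_mem {C : Finset ℤ} (h : C.Nonempty) : fmax C ∈ C := by
  rw [fmax_eq_max' h]; exact C.max'_mem h

lemma le_fmax {C : Finset ℤ} {x : ℤ} (hx : x ∈ C) : x ≤ fmax C := by
  rw [fmax_eq_max' ⟨x, hx⟩]; exact C.le_max' x hx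

lemma fmax_unique {C : Finset ℤ} {a : ℤ} (ha : a ∈ C) (h : ∀ x ∈ C, x ≤ a) : fmax C = a :=
  le_antisymm (by rw [fmax_eq_max' ⟨a, ha⟩]; exact Finset.max'_le _ _ _ h) (le_fmax ha)

lemma fmin_eq_min' {C : Finset ℤ} (h : C.Nonempty) : fmin C = C.min' h := by
  simp [fmin, ← Finset.coe_min' h]

lemma fmin_mem {C : Finset ℤ} (h : C.Nonempty) : fmin C ∈ C := by
  rw [fmin_eq_min' h]; exact C.min'_mem h

lemma fmin_le {C : Finset ℤ} {x : ℤ} (hx : x ∈ C) : fmin C ≤ x := by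
  rw [fmin_eq_min' ⟨x, hx⟩]; exact C.min'_le x hx

lemma fmin_unique {C : Finset ℤ} {a : ℤ} (ha : a ∈ C) (h : ∀ x ∈ C, a ≤ x) : fmin C = a :=
  le_antisymm (fmin_le ha) (by rw [fmin_eq_min' ⟨a, ha⟩]; exact Finset.le_min' _ _ _ h)

lemma IsChainSet.nonempty {C : Finset ℤ} (h : IsChainSet C) : C.Nonempty := by
  obtain ⟨c, k, rfl⟩ := h
  exact ⟨c, mem_image.2 ⟨0, by simp, by ring⟩⟩

lemma chain_mem_iff {C : Finset ℤ} (h : IsChainSet C) (x : ℤ) :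
    x ∈ C ↔ fmin C ≤ x ∧ x ≤ fmax C ∧ (fmax C - x) % 2 = 0 := by
  obtain ⟨c, k, rfl⟩ := h
  have hmax : fmax ((Finset.range (k + 1)).image (fun i : ℕ => c - 2 * (i : ℤ))) = c := by
    apply fmax_unique (mem_image.2 ⟨0, by simp, by ring⟩)
    intro y hy
    obtain ⟨i, hi, rfl⟩ := mem_image.1 hy
    omega
  have hmin : fmin ((Finset.range (k + 1)).image (fun i : ℕ => c - 2 * (i : ℤ))) = c - 2 * k := by
    apply fmin_unique (mem_image.2 ⟨k, by simp, by ring⟩)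
    intro y hy
    obtain ⟨i, hi, rfl⟩ := mem_image.1 hy
    simp only [mem_range] at hi
    omega
  rw [hmax, hmin]
  simp only [mem_image, mem_range]
  constructor
  · rintro ⟨i, hi, rfl⟩; omega
  · rintro ⟨h1, h2, h3⟩
    exact ⟨(c - x).toNat / 2, by omega, by omega⟩

lemma isChainSet_of {C : Finset ℤ} (hne : C.Nonempty)
    (h : ∀ x, x ∈ C ↔ fmin C ≤ x ∧ x ≤ fmax C ∧ (fmax C - x) % 2 = 0) : IsChainSet C := by
  refine ⟨fmax C, ((fmax C - fmin C) / 2).toNat, ?_⟩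
  have h1 : fmin C ∈ C := fmin_mem hne
  have h2 : fmin C ≤ fmax C := fmin_le (fmax_mem hne)
  have h3 : (fmax C - fmin C) % 2 = 0 := ((h _).1 h1).2.2
  ext x
  simp only [mem_image, mem_range]
  rw [h x]
  constructor
  · rintro ⟨ha, hb, hc⟩
    exact ⟨((fmax C - x) / 2).toNat, by omega, by omega⟩
  · rintro ⟨i, hi, rfl⟩
    omega

lemma isChainSet_singleton (a : ℤ) : IsChainSet {a} := by
  refine ⟨a, 0, ?_⟩
  ext x; simp

lemma fmax_singleton (a : ℤ) : fmax {a} = a :=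
  fmax_unique (mem_singleton_self a) (by simp)

lemma fmin_singleton (a : ℤ) : fmin {a} = a :=
  fmin_unique (mem_singleton_self a) (by simp)

lemma fmax_insert_top {C : Finset ℤ} (hne : C.Nonempty) {a : ℤ} (ha : fmax C ≤ a) :
    fmax (insert a C) = a := by
  apply fmax_unique (mem_insert_self a C)
  intro x hx
  rcases mem_insert.1 hx with rfl | hx
  · exact le_rfl
  · exact (le_fmax hx).trans ha

lemma fmin_insert_top {C : Finset ℤ} (hne : C.Nonempty) {a : ℤ} (ha : fmin C ≤ a) :
    fmin (insert a C) = fmin C := by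
  apply fmin_unique (mem_insert_of_mem (fmin_mem hne))
  intro x hx
  rcases mem_insert.1 hx with rfl | hx
  · exact ha
  · exact fmin_le hx

lemma isChainSet_insert_top {C : Finset ℤ} (h : IsChainSet C) :
    IsChainSet (insert (fmax C + 2) C) := by
  have hne := h.nonempty
  have h2 : fmax C ≤ fmax C + 2 := by omega
  have h3 : fmin C ≤ fmax C + 2 := (fmin_le (fmax_mem hne)).trans h2
  apply isChainSet_of (insert_nonempty _ _)
  intro x
  rw [fmax_insert_top hne h2, fmin_insert_top hne h3, mem_insert, chain_mem_iff h]
  constructor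
  · rintro (rfl | ⟨h1, h2, h3⟩) <;> refine ⟨by omega, by omega, by omega⟩
  · rintro ⟨h1, h2', h3'⟩
    by_cases hx : x = fmax C + 2
    · exact Or.inl hx
    · exact Or.inr ⟨h1, by omega, by omega⟩

lemma erase_top_spec {C : Finset ℤ} (h : IsChainSet C) (hlt : fmin C < fmax C) :
    IsChainSet (C.erase (fmax C)) ∧ fmax (C.erase (fmax C)) = fmax C - 2 ∧
      fmin (C.erase (fmax C)) = fmin C := by
  have hpar : (fmax C - fmin C) % 2 = 0 := ((chain_mem_iff h _).1 (fmin_mem h.nonempty)).2.2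
  have hm2 : fmax C - 2 ∈ C := (chain_mem_iff h _).2 ⟨by omega, by omega, by omega⟩
  have hm2' : fmax C - 2 ∈ C.erase (fmax C) := mem_erase.2 ⟨by omega, hm2⟩
  have hmaxE : fmax (C.erase (fmax C)) = fmax C - 2 := by
    apply fmax_unique hm2'
    intro x hx
    obtain ⟨hne, hxC⟩ := mem_erase.1 hx
    have := (chain_mem_iff h x).1 hxC
    omega
  have hminE : fmin (C.erase (fmax C)) = fmin C := by
    apply fmin_unique (mem_erase.2 ⟨by omega, fmin_mem h.nonempty⟩)
    intro x hx
    exact fmin_le (mem_erase.1 hx).2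
  refine ⟨?_, hmaxE, hminE⟩
  apply isChainSet_of ⟨_, hm2'⟩
  intro x
  rw [hmaxE, hminE, mem_erase, chain_mem_iff h]
  constructor
  · rintro ⟨h1, h2, h3, h4⟩; refine ⟨h2, by omega, by omega⟩
  · rintro ⟨h1, h2, h3⟩; refine ⟨by omega, h1, by omega, by omega⟩

lemma mem_entriesOf {S : Finset (Finset ℤ)} {x : ℤ} :
    x ∈ entriesOf S ↔ ∃ C ∈ S, x ∈ C := by
  simp [entriesOf]

lemma entriesOf_insert (C : Finset ℤ) (S : Finset (Finset ℤ)) :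
    entriesOf (insert C S) = C ∪ entriesOf S := by
  simp [entriesOf]

lemma entriesOf_erase {S : Finset (Finset ℤ)} {C : Finset ℤ}
    (hS : ∀ D ∈ S, ∀ D' ∈ S, D ≠ D' → Disjoint D D') (hC : C ∈ S) :
    entriesOf (S.erase C) = entriesOf S \ C := by
  ext x
  simp only [mem_entriesOf, mem_erase, mem_sdiff]
  constructor
  · rintro ⟨D, ⟨hne, hDS⟩, hx⟩
    exact ⟨⟨D, hDS, hx⟩, fun hxC => disjoint_left.1 (hS D hDS C hC hne) hx hxC⟩
  · rintro ⟨⟨D, hDS, hx⟩, hxC⟩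
    exact ⟨D, ⟨fun h => hxC (h ▸ hx), hDS⟩, hx⟩

lemma linked_symm {C D : Finset ℤ} (h : LinkedChains C D) : LinkedChains D C :=
  ⟨h.1.symm, h.2.symm⟩

lemma interlaced_map {S T : Finset (Finset ℤ)} (f : Finset ℤ → Finset ℤ)
    (hf : ∀ C ∈ S, f C ∈ T)
    (hsurj : ∀ C ∈ T, ∃ C' ∈ S, f C' = C)
    (hlink : ∀ C ∈ S, ∀ D ∈ S, LinkedChains C D → LinkedChains (f C) (f D))
    (hS : Interlaced S) : Interlaced T := by
  intro C hC D hD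
  obtain ⟨C', hC', rfl⟩ := hsurj C hC
  obtain ⟨D', hD', rfl⟩ := hsurj D hD
  have h := hS C' hC' D' hD'
  clear hD
  induction h with
  | refl => exact Relation.ReflTransGen.refl
  | @tail b c h1 h2 ih =>
      exact Relation.ReflTransGen.tail (ih h2.1) ⟨hf _ h2.1, hf _ h2.2.1, hlink _ h2.1 _ h2.2.1 h2.2.2⟩

lemma interlaced_insert {S : Finset (Finset ℤ)} {c d : Finset ℤ} (hS : Interlaced S)
    (hd : d ∈ S) (hlink : LinkedChains c d) : Interlaced (insert c S) := by
  have hmono : ∀ X ∈ S, ∀ Y ∈ S,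
      Relation.ReflTransGen (fun X Y => X ∈ insert c S ∧ Y ∈ insert c S ∧ LinkedChains X Y) X Y := by
    intro X hX Y hY
    exact Relation.ReflTransGen.mono (fun a b hab =>
      ⟨mem_insert_of_mem hab.1, mem_insert_of_mem hab.2.1, hab.2.2⟩) _ _ (hS X hX Y hY)
  have hcd : Relation.ReflTransGen
      (fun X Y => X ∈ insert c S ∧ Y ∈ insert c S ∧ LinkedChains X Y) c d :=
    Relation.ReflTransGen.single ⟨mem_insert_self c S, mem_insert_of_mem hd, hlink⟩
  have hdc : Relation.ReflTransGen
      (fun X Y => X ∈ insert c S ∧ Y ∈ insert c S ∧ LinkedChains X Y) d c :=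
    Relation.ReflTransGen.single ⟨mem_insert_of_mem hd, mem_insert_self c S, linked_symm hlink⟩
  intro X hX Y hY
  rcases mem_insert.1 hX with hX' | hX' <;> rcases mem_insert.1 hY with hY' | hY'
  · rw [hX', hY']
  · rw [hX']; exact hcd.trans (hmono d hd Y hY')
  · rw [hY']; exact (hmono X hX' d hd).trans hdc
  · exact hmono X hX' Y hY' 

/-- Extending the chain `D` (whose max is `M` or `M-1`) by a new top entry. -/
lemma ext_chain {n : ℕ} {V : Finset (Finset ℤ)} (hV : AdmissibleConfig n V)
    {D : Finset ℤ} (hD : D ∈ V)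
    (hmax : fmax (entriesOf V) - 1 ≤ fmax D)
    (hsing : ({fmax D + 1} : Finset ℤ) ∉ V) :
    AdmissibleConfig (n + 1) (insert (insert (fmax D + 2) D) (V.erase D)) ∧
      Reduces (insert (insert (fmax D + 2) D) (V.erase D)) V := by
  classical
  obtain ⟨⟨hchain, hdisj⟩, hinter, hcard, hpos, h1⟩ := hV
  set E := entriesOf V with hE
  set M := fmax E with hM
  have hEne : E.Nonempty := ⟨1, h1⟩
  have hleM : ∀ x ∈ E, x ≤ M := fun x hx => le_fmax hx
  have hM1 : 1 ≤ M := hleM 1 h1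
  have hDchain : IsChainSet D := hchain D hD
  have hDne : D.Nonempty := hDchain.nonempty
  have hDsub : ∀ x ∈ D, x ∈ E := fun x hx => mem_entriesOf.2 ⟨D, hD, hx⟩
  have hfD : fmax D ≤ M := hleM _ (hDsub _ (fmax_mem hDne))
  set a : ℤ := fmax D + 2 with ha
  have haE : a ∉ E := fun h => by have := hleM a h; omega
  set Dp : Finset ℤ := insert a D with hDp
  set U : Finset (Finset ℤ) := insert Dp (V.erase D) with hU
  have hDpchain : IsChainSet Dp := isChainSet_insert_top hDchain
  have hfmaxDp : fmax Dp = a := fmax_insert_top hDne (by omega)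
  have hfminDp : fmin Dp = fmin D :=
    fmin_insert_top hDne ((fmin_le (fmax_mem hDne)).trans (by omega))
  have hDpnotV : Dp ∉ V := fun h => haE (mem_entriesOf.2 ⟨Dp, h, mem_insert_self a D⟩)
  -- entries of U
  have hEU : entriesOf U = insert a E := by
    rw [hU, entriesOf_insert, entriesOf_erase hdisj hD, hDp]
    ext x
    simp only [mem_union, mem_insert, mem_sdiff, Finset.mem_insert]
    constructor
    · rintro ((rfl | hx) | ⟨hx, _⟩)
      · exact Or.inl rfl
      · exact Or.inr (hDsub x hx)
      · exact Or.inr hx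
    · rintro (rfl | hx)
      · exact Or.inl (Or.inl rfl)
      · by_cases hxD : x ∈ D
        · exact Or.inl (Or.inr hxD)
        · exact Or.inr ⟨hx, hxD⟩
  have hfmaxU : fmax (entriesOf U) = a := by
    rw [hEU]
    exact fmax_insert_top hEne (by omega)
  -- membership in U
  have hmemU : ∀ X, X ∈ U ↔ X = Dp ∨ (X ∈ V ∧ X ≠ D) := by
    intro X
    rw [hU, Finset.mem_insert, mem_erase]
    tauto
  -- chain collection
  have hcc : IsChainCollection U := by
    constructor
    · intro C hC
      rcases (hmemU C).1 hC with rfl | ⟨hCV, _⟩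
      · exact hDpchain
      · exact hchain C hCV
    · intro C hC X hX hne
      rcases (hmemU C).1 hC with rfl | ⟨hCV, hCD⟩ <;>
        rcases (hmemU X).1 hX with h' | ⟨hXV, hXD⟩
      · exact absurd h'.symm hne
      · rw [hDp, disjoint_insert_left]
        exact ⟨fun h => haE (mem_entriesOf.2 ⟨X, hXV, h⟩),
          hdisj D hD X hXV (fun h => hXD h.symm)⟩
      · subst h'
        rw [hDp, disjoint_insert_right]
        exact ⟨fun h => haE (mem_entriesOf.2 ⟨C, hCV, h⟩), hdisj C hCV D hD hCD⟩
      · exact hdisj C hCV X hXV hne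
  -- interlaced
  have hlinkmono : ∀ X ∈ V, X ≠ D → LinkedChains D X → LinkedChains Dp X := by
    intro X hXV hXD hl
    obtain ⟨hdis, hor⟩ := hl
    have hXne : X.Nonempty := (hchain X hXV).nonempty
    have hfX : fmax X ≤ M := hleM _ (mem_entriesOf.2 ⟨X, hXV, fmax_mem hXne⟩)
    have hdis' : Disjoint Dp X := by
      rw [hDp, disjoint_insert_left]
      exact ⟨fun h => haE (mem_entriesOf.2 ⟨X, hXV, h⟩), hdis⟩
    refine ⟨hdis', Or.inl ?_⟩
    rw [hfmaxDp, hfminDp]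
    have hminfD : fmin D ≤ fmax D := fmin_le (fmax_mem hDne)
    rcases hor with ⟨u, v⟩ | ⟨u, v⟩
    · exact ⟨by omega, v⟩
    · exact ⟨by omega, by omega⟩
  have hinterU : Interlaced U := by
    apply interlaced_map (fun X => if X = D then Dp else X) ?_ ?_ ?_ hinter
    · intro C hC
      by_cases h : C = D
      · simp only [h, if_pos rfl]
        exact (hmemU Dp).2 (Or.inl rfl)
      · simp only [if_neg h]
        exact (hmemU C).2 (Or.inr ⟨hC, h⟩)
    · intro C hC
      rcases (hmemU C).1 hC with rfl | ⟨hCV, hCD⟩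
      · exact ⟨D, hD, if_pos rfl⟩
      · exact ⟨C, hCV, if_neg hCD⟩
    · intro C hC X hX hl
      by_cases hCD : C = D <;> by_cases hXD : X = D
      · subst hCD; subst hXD
        simp only [if_pos rfl]
        exact absurd (disjoint_self.1 hl.1) (Finset.nonempty_iff_ne_empty.1 hDne)
      · subst hCD
        simp only [if_pos rfl, if_neg hXD]
        exact hlinkmono X hX hXD hl
      · subst hXD
        simp only [if_pos rfl, if_neg hCD]
        exact linked_symm (hlinkmono C hC hCD (linked_symm hl))
      · simp only [if_neg hCD, if_neg hXD]; exact hl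
  -- cardinality
  have hcardU : (entriesOf U).card = n + 1 := by
    rw [hEU, Finset.card_insert_of_notMem haE, hcard]
  -- positivity
  have hposU : ∀ x ∈ entriesOf U, 0 < x := by
    intro x hx
    rw [hEU, Finset.mem_insert] at hx
    rcases hx with rfl | hx
    · omega
    · exact hpos x hx
  have h1U : (1 : ℤ) ∈ entriesOf U := by
    rw [hEU]; exact mem_insert_of_mem h1
  refine ⟨⟨hcc, hinterU, hcardU, hposU, h1U⟩, ?_⟩
  -- Reduces
  right
  have hsingU : ({fmax (entriesOf U) - 1} : Finset ℤ) ∉ U := by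
    rw [hfmaxU]
    intro h
    rcases (hmemU _).1 h with h' | ⟨h', _⟩
    · have : a ∈ ({a - 1} : Finset ℤ) := h' ▸ mem_insert_self a D
      simp at this; omega
    · have : a - 1 = fmax D + 1 := by omega
      rw [this] at h'
      exact hsing h'
  refine ⟨hsingU, Dp, (hmemU Dp).2 (Or.inl rfl), ?_, ?_⟩
  · rw [hfmaxU]; exact mem_insert_self a D
  · rw [hfmaxU]
    have haD : a ∉ D := fun h => by have := le_fmax h; omega
    have h1 : Dp.erase a = D := by rw [hDp]; exact erase_insert haD
    have h2 : U.erase Dp = V.erase D := by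
      rw [hU]
      apply erase_insert
      intro h
      exact hDpnotV (mem_erase.1 h).2
    rw [h1, h2, insert_erase hD]

/-- Extending by a new singleton chain `{M-1}` when `M-1` is not an entry. -/
lemma ext_singleton {n : ℕ} {V : Finset (Finset ℤ)} (hV : AdmissibleConfig n V)
    (hM2 : 2 ≤ fmax (entriesOf V))
    (hnot : fmax (entriesOf V) - 1 ∉ entriesOf V)
    {D : Finset ℤ} (hD : D ∈ V) (hMD : fmax (entriesOf V) ∈ D)
    (hminD : fmin D < fmax (entriesOf V)) :
    AdmissibleConfig (n + 1) (insert ({fmax (entriesOf V) - 1} : Finset ℤ) V) ∧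
      Reduces (insert ({fmax (entriesOf V) - 1} : Finset ℤ) V) V := by
  classical
  obtain ⟨⟨hchain, hdisj⟩, hinter, hcard, hpos, h1⟩ := hV
  set E := entriesOf V with hE
  set M := fmax E with hM
  have hEne : E.Nonempty := ⟨1, h1⟩
  have hleM : ∀ x ∈ E, x ≤ M := fun x hx => le_fmax hx
  have hDchain : IsChainSet D := hchain D hD
  have hDne : D.Nonempty := hDchain.nonempty
  have hDsub : ∀ x ∈ D, x ∈ E := fun x hx => mem_entriesOf.2 ⟨D, hD, hx⟩
  have hfmaxD : fmax D = M := fmax_unique hMD (fun x hx => hleM x (hDsub x hx))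
  set c : Finset ℤ := ({M - 1} : Finset ℤ) with hc
  set U : Finset (Finset ℤ) := insert c V with hU
  have hcV : c ∉ V := fun h => hnot (mem_entriesOf.2 ⟨c, h, mem_singleton_self _⟩)
  have hEU : entriesOf U = insert (M - 1) E := by
    rw [hU, entriesOf_insert, hc]
    ext x
    simp only [mem_union, mem_singleton, Finset.mem_insert, ← hE]
  have hfmaxU : fmax (entriesOf U) = M := by
    rw [hEU]
    apply fmax_unique (mem_insert_of_mem (fmax_mem hEne))
    intro x hx
    rcases Finset.mem_insert.1 hx with rfl | hx
    · omega
    · exact hleM x hx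
  have hcc : IsChainCollection U := by
    constructor
    · intro C hC
      rcases Finset.mem_insert.1 hC with rfl | hC
      · exact isChainSet_singleton _
      · exact hchain C hC
    · intro C hC X hX hne
      have hdisjc : ∀ Y ∈ V, Disjoint c Y := by
        intro Y hY
        rw [hc, Finset.disjoint_singleton_left]
        exact fun h => hnot (mem_entriesOf.2 ⟨Y, hY, h⟩)
      rcases Finset.mem_insert.1 hC with rfl | hC <;>
        rcases Finset.mem_insert.1 hX with h' | hX
      · exact absurd h'.symm hne
      · exact hdisjc X hX
      · subst h'; exact (hdisjc C hC).symm
      · exact hdisj C hC X hX hne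
  have hpar : (fmax D - fmin D) % 2 = 0 :=
    ((chain_mem_iff hDchain _).1 (fmin_mem hDne)).2.2
  have hlcD : LinkedChains c D := by
    refine ⟨?_, Or.inr ?_⟩
    · rw [hc, Finset.disjoint_singleton_left]
      exact fun h => hnot (hDsub _ h)
    · rw [hc, hfmaxD, fmax_singleton]
      exact ⟨by omega, by omega⟩
  have hinterU : Interlaced U := interlaced_insert hinter hD hlcD
  have hcardU : (entriesOf U).card = n + 1 := by
    rw [hEU, Finset.card_insert_of_notMem hnot, hcard]
  have hposU : ∀ x ∈ entriesOf U, 0 < x := by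
    intro x hx
    rw [hEU, Finset.mem_insert] at hx
    rcases hx with rfl | hx
    · omega
    · exact hpos x hx
  refine ⟨⟨hcc, hinterU, hcardU, hposU, by rw [hEU]; exact mem_insert_of_mem h1⟩, ?_⟩
  left
  rw [hfmaxU]
  exact ⟨mem_insert_self c V, (erase_insert hcV).symm⟩

lemma reduces_converse {n : ℕ} {V U : Finset (Finset ℤ)}
    (hV : AdmissibleConfig n V) (hU : AdmissibleConfig (n + 1) U) (hR : Reduces U V) :
    (fmax (entriesOf V) - 1 ∉ entriesOf V ∧
        U = insert ({fmax (entriesOf V) - 1} : Finset ℤ) V) ∨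
    (∃ D ∈ V, fmax (entriesOf V) ∈ D ∧
        U = insert (insert (fmax (entriesOf V) + 2) D) (V.erase D)) ∨
    (∃ D ∈ V, fmax (entriesOf V) - 1 ∈ D ∧
        U = insert (insert (fmax (entriesOf V) + 1) D) (V.erase D)) := by
  classical
  obtain ⟨⟨hchainV, hdisjV⟩, hinterV, hcardV, hposV, h1V⟩ := hV
  obtain ⟨⟨hchainU, hdisjU⟩, hinterU, hcardU, hposU, h1U⟩ := hU
  set m := fmax (entriesOf U) with hm
  have hUne : (entriesOf U).Nonempty := ⟨1, h1U⟩
  have hleU : ∀ x ∈ entriesOf U, x ≤ m := fun x hx => le_fmax hx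
  rcases hR with ⟨hmem, hVeq⟩ | ⟨hns, C, hCU, hmC, hVeq⟩
  · -- case A : removed singleton {m-1}
    left
    have hUeq : U = insert ({m - 1} : Finset ℤ) V := by
      rw [hVeq, insert_erase hmem]
    have hEV : entriesOf V = entriesOf U \ ({m - 1} : Finset ℤ) := by
      rw [hVeq]; exact entriesOf_erase hdisjU hmem
    have hmE : m ∈ entriesOf V := by
      obtain ⟨X, hXU, hmX⟩ := mem_entriesOf.1 (fmax_mem hUne)
      rw [hEV, mem_sdiff]
      exact ⟨mem_entriesOf.2 ⟨X, hXU, hmX⟩, by simp; omega⟩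
    have hMm : fmax (entriesOf V) = m := by
      apply fmax_unique hmE
      intro x hx
      rw [hEV, mem_sdiff] at hx
      exact hleU x hx.1
    rw [hMm]
    refine ⟨?_, hUeq⟩
    rw [hEV]
    simp
  · -- case B : removed top entry m from chain C
    set C' := C.erase m with hC'
    have hCchain : IsChainSet C := hchainU C hCU
    have hC'ne : C'.Nonempty := by
      rcases Finset.eq_empty_or_nonempty C' with he | hne
      · exfalso
        have hemptyV : (∅ : Finset ℤ) ∈ V := by
          rw [hVeq, ← he]; exact mem_insert_self _ _
        exact Finset.not_nonempty_empty (hchainV ∅ hemptyV).nonempty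
      · exact hne
    obtain ⟨c', hc'⟩ := hC'ne
    have hc'C : c' ∈ C := (mem_erase.1 hc').2
    have hc'm : c' ≠ m := (mem_erase.1 hc').1
    have hCsub : ∀ x ∈ C, x ∈ entriesOf U := fun x hx => mem_entriesOf.2 ⟨C, hCU, hx⟩
    have hfmaxC : fmax C = m := fmax_unique hmC (fun x hx => hleU x (hCsub x hx))
    have hminC : fmin C < fmax C := by
      have h1 := fmin_le hc'C
      have h2 := hleU c' (hCsub c' hc'C)
      omega
    obtain ⟨hC'chain, hfmaxC', hfminC'⟩ := erase_top_spec hCchain hminC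
    rw [hfmaxC] at hC'chain hfmaxC' hfminC'
    have hC'V : C' ∈ V := by rw [hVeq]; exact mem_insert_self _ _
    have hC'U : C' ∉ U := by
      intro h
      have hne : C' ≠ C := by
        intro he
        rw [← he] at hmC
        exact (mem_erase.1 hmC).1 rfl
      exact disjoint_left.1 (hdisjU C' h C hCU hne) hc' hc'C
    have hEV : entriesOf V = (entriesOf U).erase m := by
      rw [hVeq, entriesOf_insert, entriesOf_erase hdisjU hCU]
      ext x
      simp only [mem_union, mem_sdiff, mem_erase, hC', Finset.mem_erase]
      constructor
      · rintro (⟨hxm, hxC⟩ | ⟨hx, hxC⟩)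
        · exact ⟨hxm, hCsub x hxC⟩
        · exact ⟨fun he => hxC (he ▸ hmC), hx⟩
      · rintro ⟨hxm, hx⟩
        by_cases hxC : x ∈ C
        · exact Or.inl ⟨hxm, hxC⟩
        · exact Or.inr ⟨hx, hxC⟩
    have hm2C' : m - 2 ∈ C' := hfmaxC' ▸ fmax_mem ⟨c', hc'⟩
    have hUerase : U.erase C = V.erase C' := by
      rw [hVeq]
      rw [erase_insert]
      intro h
      exact hC'U (mem_erase.1 h).2
    have hUeq : ∀ b : ℤ, b = m → U = insert (insert b C') (V.erase C') := by
      intro b hb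
      rw [hb, ← hUerase, hC', insert_erase hmC, insert_erase hCU]
    by_cases hm1 : m - 1 ∈ entriesOf V
    · -- removed entry was M + 1
      right; right
      have hMm : fmax (entriesOf V) = m - 1 := by
        apply fmax_unique hm1
        intro x hx
        rw [hEV, mem_erase] at hx
        have := hleU x hx.2
        have := hx.1
        omega
      rw [hMm]
      exact ⟨C', hC'V, by rw [show m - 1 - 1 = m - 2 by ring]; exact hm2C',
        hUeq (m - 1 + 1) (by ring)⟩
    · -- removed entry was M + 2
      right; left
      have hm2E : m - 2 ∈ entriesOf V := mem_entriesOf.2 ⟨C', hC'V, hm2C'⟩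
      have hMm : fmax (entriesOf V) = m - 2 := by
        apply fmax_unique hm2E
        intro x hx
        have hx' := hx
        rw [hEV, mem_erase] at hx'
        have := hleU x hx'.2
        have : x ≠ m - 1 := fun he => hm1 (he ▸ hx)
        omega
      rw [hMm]
      exact ⟨C', hC'V, hm2C', hUeq (m - 2 + 2) (by ring)⟩

/-- **Algorithm 3.8 / Proposition 3.9.** For every admissible configuration `V` of size
`n ≥ 2` there exist exactly two admissible configurations `U` of size `n + 1` whose
reduction is `V`. -/
theorem reduction_two_to_one (n : ℕ) (hn : 2 ≤ n) (V : Finset (Finset ℤ))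
    (hV : AdmissibleConfig n V) :
    ∃ U₁ U₂ : Finset (Finset ℤ), U₁ ≠ U₂ ∧
      ∀ U : Finset (Finset ℤ),
        (AdmissibleConfig (n + 1) U ∧ Reduces U V) ↔ (U = U₁ ∨ U = U₂) := by
  classical
  obtain ⟨⟨hchain, hdisj⟩, hinter, hcard, hpos, h1⟩ := hV
  have hVadm : AdmissibleConfig n V := ⟨⟨hchain, hdisj⟩, hinter, hcard, hpos, h1⟩
  have hEne : (entriesOf V).Nonempty := ⟨1, h1⟩
  have hME : fmax (entriesOf V) ∈ entriesOf V := fmax_mem hEne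
  have hleM : ∀ x ∈ entriesOf V, x ≤ fmax (entriesOf V) := fun x hx => le_fmax hx
  have hM1 : 1 ≤ fmax (entriesOf V) := hleM 1 h1
  obtain ⟨y, hyE, hy1⟩ : ∃ y ∈ entriesOf V, y ≠ (1 : ℤ) :=
    Finset.exists_mem_ne (by omega) 1
  have hM2 : 2 ≤ fmax (entriesOf V) := by
    have := hpos y hyE; have := hleM y hyE; omega
  obtain ⟨D₀, hD₀V, hMD₀⟩ := mem_entriesOf.1 hME
  have hD₀chain : IsChainSet D₀ := hchain D₀ hD₀V
  have hD₀ne : D₀.Nonempty := hD₀chain.nonempty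
  have hD₀sub : ∀ x ∈ D₀, x ∈ entriesOf V := fun x hx => mem_entriesOf.2 ⟨D₀, hD₀V, hx⟩
  have hfmaxD₀ : fmax D₀ = fmax (entriesOf V) :=
    fmax_unique hMD₀ fun x hx => hleM x (hD₀sub x hx)
  have huniq : ∀ z : ℤ, ∀ X ∈ V, ∀ Y ∈ V, z ∈ X → z ∈ Y → X = Y := by
    intro z X hX Y hY hzX hzY
    by_contra hne
    exact disjoint_left.1 (hdisj X hX Y hY hne) hzX hzY
  have hminD₀ : fmin D₀ < fmax (entriesOf V) := by
    by_contra hcon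
    push_neg at hcon
    obtain ⟨z, hzE, hzM⟩ : ∃ z ∈ entriesOf V, z ≠ fmax (entriesOf V) :=
      Finset.exists_mem_ne (by omega) _
    obtain ⟨X, hXV, hzX⟩ := mem_entriesOf.1 hzE
    have hXD₀ : X ≠ D₀ := by
      intro he; subst he
      exact hzM (le_antisymm (hleM z hzE) (hcon.trans (fmin_le hzX)))
    have hpath := hinter D₀ hD₀V X hXV
    rcases Relation.ReflTransGen.cases_head hpath with heq | ⟨Y, ⟨_, hYV, hlink⟩, _⟩
    · exact hXD₀ heq.symm
    · obtain ⟨hdisY, hor⟩ := hlink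
      have hYne : Y.Nonempty := (hchain Y hYV).nonempty
      have hfY : fmax Y ≤ fmax (entriesOf V) :=
        hleM _ (mem_entriesOf.2 ⟨Y, hYV, fmax_mem hYne⟩)
      rw [hfmaxD₀] at hor
      rcases hor with ⟨u, v⟩ | ⟨u, v⟩ <;> omega
  have hsing0 : ({fmax D₀ + 1} : Finset ℤ) ∉ V := by
    rw [hfmaxD₀]
    intro h
    have := hleM _ (mem_entriesOf.2 ⟨_, h, mem_singleton_self (fmax (entriesOf V) + 1)⟩)
    omega
  have hext1 := ext_chain hVadm hD₀V (by rw [hfmaxD₀]; omega) hsing0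
  have hboundErase : ∀ D ∈ V, ∀ a : ℤ,
      ∀ x ∈ entriesOf (insert (insert a D) (V.erase D)),
        x = a ∨ x ∈ entriesOf V := by
    intro D hD a x hx
    obtain ⟨X, hXU, hxX⟩ := mem_entriesOf.1 hx
    rcases Finset.mem_insert.1 hXU with rfl | hXV
    · rcases Finset.mem_insert.1 hxX with rfl | hxD
      · exact Or.inl rfl
      · exact Or.inr (mem_entriesOf.2 ⟨D, hD, hxD⟩)
    · exact Or.inr (mem_entriesOf.2 ⟨X, (mem_erase.1 hXV).2, hxX⟩)
  have hmemTop : fmax D₀ + 2 ∈ entriesOf (insert (insert (fmax D₀ + 2) D₀) (V.erase D₀)) :=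
    mem_entriesOf.2 ⟨_, mem_insert_self _ _, mem_insert_self _ _⟩
  by_cases hcase : fmax (entriesOf V) - 1 ∈ entriesOf V
  · -- the chain with maximum M-1 exists; extend it by M+1
    obtain ⟨D₁, hD₁V, hMD₁⟩ := mem_entriesOf.1 hcase
    have hD₁chain : IsChainSet D₁ := hchain D₁ hD₁V
    have hfmaxD₁ : fmax D₁ = fmax (entriesOf V) - 1 := by
      have hle : fmax D₁ ≤ fmax (entriesOf V) :=
        hleM _ (mem_entriesOf.2 ⟨D₁, hD₁V, fmax_mem hD₁chain.nonempty⟩)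
      have hge : fmax (entriesOf V) - 1 ≤ fmax D₁ := le_fmax hMD₁
      by_contra hne
      have heq : fmax D₁ = fmax (entriesOf V) := by omega
      have hMD₁' : fmax (entriesOf V) ∈ D₁ := heq ▸ fmax_mem hD₁chain.nonempty
      have hD₁D₀ : D₁ = D₀ := huniq _ D₁ hD₁V D₀ hD₀V hMD₁' hMD₀
      subst hD₁D₀
      have hpar := ((chain_mem_iff hD₁chain _).1 hMD₁).2.2
      rw [hfmaxD₀] at hpar
      omega
    have hsing1 : ({fmax D₁ + 1} : Finset ℤ) ∉ V := by
      rw [hfmaxD₁, show fmax (entriesOf V) - 1 + 1 = fmax (entriesOf V) from by ring]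
      intro h
      have heq : ({fmax (entriesOf V)} : Finset ℤ) = D₀ :=
        huniq _ _ h D₀ hD₀V (mem_singleton_self _) hMD₀
      rw [← heq, fmin_singleton] at hminD₀
      omega
    have hext2 := ext_chain hVadm hD₁V (by rw [hfmaxD₁]) hsing1
    refine ⟨insert (insert (fmax D₀ + 2) D₀) (V.erase D₀),
            insert (insert (fmax D₁ + 2) D₁) (V.erase D₁), ?_, ?_⟩
    · intro he
      rw [he] at hmemTop
      rcases hboundErase D₁ hD₁V _ _ hmemTop with h' | h'
      · omega
      · have := hleM _ h'; omega
    · intro U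
      constructor
      · rintro ⟨hUadm, hUred⟩
        rcases reduces_converse hVadm hUadm hUred with
          ⟨hnot, _⟩ | ⟨D, hDV, hMD, hUeq⟩ | ⟨D, hDV, hMD, hUeq⟩
        · exact absurd hcase hnot
        · left
          have hDD₀ : D = D₀ := huniq _ D hDV D₀ hD₀V hMD hMD₀
          subst hDD₀
          rw [hfmaxD₀]
          exact hUeq
        · right
          have hDD₁ : D = D₁ := huniq _ D hDV D₁ hD₁V hMD hMD₁
          subst hDD₁
          rw [hfmaxD₁, show fmax (entriesOf V) - 1 + 2 = fmax (entriesOf V) + 1 from by ring]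
          exact hUeq
      · rintro (rfl | rfl)
        · exact hext1
        · exact hext2
  · -- M-1 is not an entry; add the singleton {M-1}
    have hext2 := ext_singleton hVadm hM2 hcase hD₀V hMD₀ hminD₀
    refine ⟨insert (insert (fmax D₀ + 2) D₀) (V.erase D₀),
            insert ({fmax (entriesOf V) - 1} : Finset ℤ) V, ?_, ?_⟩
    · intro he
      rw [he] at hmemTop
      rw [entriesOf_insert] at hmemTop
      rcases mem_union.1 hmemTop with h' | h'
      · rw [mem_singleton] at h'; omega
      · have := hleM _ h'; omega
    · intro U
      constructor
      · rintro ⟨hUadm, hUred⟩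
        rcases reduces_converse hVadm hUadm hUred with
          ⟨_, hUeq⟩ | ⟨D, hDV, hMD, hUeq⟩ | ⟨D, hDV, hMD, hUeq⟩
        · right; exact hUeq
        · left
          have hDD₀ : D = D₀ := huniq _ D hDV D₀ hD₀V hMD hMD₀
          subst hDD₀
          rw [hfmaxD₀]
          exact hUeq
        · exact absurd (mem_entriesOf.2 ⟨D, hDV, hMD⟩) hcase
      · rintro (rfl | rfl)
        · exact hext1
        · exact hext2
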